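/- Let q̄ = (q_1, q_2, ...) be a sequence of probabilities with q_l < 1 for all l > 0. Let δ > 0 and assume that for an unbounded set of n ∈ ℕ one has ∑_{l=1}^n q_l ≤ n^δ. For each n let E^n_δ be the event that no vertex x ∈ [n] has more than 8·n^{2δ} neighbors in M^n_{q̄}. Then limsup_{n→∞} Pr[E^n_δ holds in M^n_{q̄}] = 1. -/

import Mathlib

open FirstOrder Filter

/-- The simple graph on `Fin n` determined by a boolean function on unordered pairs. -/
def graphOf {n : ℕ} (f : Sym2 (Fin n) → Bool) : SimpleGraph (Fin n) where
  Adj i j := i ≠ j ∧ f s(i, j)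
  symm := by
    constructor
    intro i j h
    exact ⟨Ne.symm h.1, by rw [Sym2.eq_swap]; exact h.2⟩
  loopless := by constructor; intro i h; exact h.1 rfl

/-- The probability that the pair `e` is an edge, given edge probabilities `p`
indexed by the distance between the endpoints. -/
noncomputable def edgeProb (p : ℕ → ℝ) {n : ℕ} (e : Sym2 (Fin n)) : ℝ :=
  Sym2.lift ⟨fun i j => p (Nat.dist i.val j.val),
    fun i j => by simp only [Nat.dist_comm]⟩ e

/-- The probability weight of a particular configuration of edges. -/
noncomputable def weight (p : ℕ → ℝ) {n : ℕ} (f : Sym2 (Fin n) → Bool) : ℝ :=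
  ∏ e : Sym2 (Fin n),
    if e.IsDiag then (if f e then 0 else 1)
    else (if f e then edgeProb p e else 1 - edgeProb p e)

open Classical in
/-- The probability that the random graph `M^n_{p̄}` (on vertex set `Fin n`,
representing `[n] = {1,…,n}`, where distinct vertices at distance `d` are joined
independently with probability `p d`) satisfies the event `E`. -/
noncomputable def probEvent (p : ℕ → ℝ) (n : ℕ) (E : SimpleGraph (Fin n) → Prop) : ℝ :=
  ∑ f : Sym2 (Fin n) → Bool, if E (graphOf f) then weight p f else 0

/-- The probability that `M^n_{p̄}` satisfies the first-order sentence `ψ`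
in the language of graphs. -/
noncomputable def probSat (p : ℕ → ℝ) (n : ℕ) (ψ : Language.graph.Sentence) : ℝ :=
  probEvent p n (fun G => @Language.Sentence.Realize _ _ G.structure ψ)

/-- `M^n_{p̄}` satisfies the 0-1 law for first order logic. -/
def ZeroOneLaw (p : ℕ → ℝ) : Prop :=
  ∀ ψ : Language.graph.Sentence, ∃ c : ℝ, (c = 0 ∨ c = 1) ∧
    Tendsto (fun n => probSat p n ψ) atTop (nhds c)

/-- `M^n_{p̄}` satisfies the convergence law for first order logic. -/
def ConvergenceLaw (p : ℕ → ℝ) : Prop :=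
  ∀ ψ : Language.graph.Sentence, ∃ c : ℝ,
    Tendsto (fun n => probSat p n ψ) atTop (nhds c)

/-- `M^n_{p̄}` satisfies the weak convergence law for first order logic. -/
def WeakConvergenceLaw (p : ℕ → ℝ) : Prop :=
  ∀ ψ : Language.graph.Sentence,
    limsup (fun n => probSat p n ψ) atTop - liminf (fun n => probSat p n ψ) atTop < 1

/-- `q̄ ∈ Gen₁(p̄)`: `q̄` is obtained from `p̄` by inserting zeros (indices start at 1). -/
def Gen1 (p q : ℕ → ℝ) : Prop :=
  ∃ f : ℕ → ℕ, (∀ i j, 1 ≤ i → i < j → f i < f j) ∧ (∀ i, 1 ≤ i → 1 ≤ f i) ∧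
    (∀ i, 1 ≤ i → q (f i) = p i) ∧
    (∀ l, 1 ≤ l → (∀ i, 1 ≤ i → f i ≠ l) → q l = 0)

/-- `q̄ ∈ Gen₂(p̄)`: `q̄` is obtained from `p̄` by decreasing entries. -/
def Gen2 (p q : ℕ → ℝ) : Prop :=
  ∀ l, 1 ≤ l → q l ∈ Set.Icc (0 : ℝ) (p l)

/-- `q̄ ∈ Gen₃(p̄)`: `q̄` is obtained from `p̄` by replacing some entries with zero. -/
def Gen3 (p q : ℕ → ℝ) : Prop :=
  ∀ l, 1 ≤ l → q l = 0 ∨ q l = p l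

/-- The condition `lim_{n→∞} log(∏_{i=1}^n (1-p_i))/log n = 0`. -/
def StarCondition (p : ℕ → ℝ) : Prop :=
  Tendsto (fun n : ℕ => Real.log (∏ i ∈ Finset.Icc 1 n, (1 - p i)) / Real.log n)
    atTop (nhds 0)


open Finset in
lemma weight_expect {n : ℕ} (q : ℕ → ℝ)
    (S : Finset (Sym2 (Fin n))) (hS : ∀ e ∈ S, ¬ e.IsDiag) :
    ∑ f : Sym2 (Fin n) → Bool, weight q f * ∏ e ∈ S, (if f e then (1:ℝ) else 0)
      = ∏ e ∈ S, edgeProb q e := by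
  classical
  set w : Sym2 (Fin n) → Bool → ℝ := fun e b =>
    (if e.IsDiag then (if b then 0 else 1)
      else (if b then edgeProb q e else 1 - edgeProb q e)) *
    (if e ∈ S then (if b then 1 else 0) else 1) with hw
  have key : ∀ f : Sym2 (Fin n) → Bool,
      weight q f * ∏ e ∈ S, (if f e then (1:ℝ) else 0)
        = ∏ e : Sym2 (Fin n), w e (f e) := by
    intro f
    rw [hw]
    simp only [Finset.prod_mul_distrib]
    congr 1
    · symm; rw [Finset.prod_ite_mem, Finset.univ_inter]
  calc ∑ f : Sym2 (Fin n) → Bool, weight q f * ∏ e ∈ S, (if f e then (1:ℝ) else 0)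
      = ∑ f : Sym2 (Fin n) → Bool, ∏ e : Sym2 (Fin n), w e (f e) := by
        exact Finset.sum_congr rfl fun f _ => key f
    _ = ∏ e : Sym2 (Fin n), ∑ b : Bool, w e b := (Fintype.prod_sum fun e b => w e b).symm
    _ = ∏ e : Sym2 (Fin n), (if e ∈ S then edgeProb q e else 1) := by
        apply Finset.prod_congr rfl
        intro e _
        rw [Fintype.sum_bool, hw]
        by_cases heS : e ∈ S
        · have hd := hS e heS
          simp [heS, hd]
        · by_cases hd : e.IsDiag <;> simp [heS, hd]
    _ = ∏ e ∈ S, edgeProb q e := by rw [Finset.prod_ite_mem, Finset.univ_inter]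

lemma sum_weight {n : ℕ} (q : ℕ → ℝ) :
    ∑ f : Sym2 (Fin n) → Bool, weight q f = 1 := by
  have := weight_expect (n := n) q ∅ (by simp)
  simpa using this

lemma edgeProb_eq {n : ℕ} (q : ℕ → ℝ) (i j : Fin n) :
    edgeProb q s(i, j) = q (Nat.dist i.val j.val) := rfl

lemma edgeProb_mem {n : ℕ} (q : ℕ → ℝ) (hq : ∀ l, 1 ≤ l → 0 ≤ q l ∧ q l < 1)
    (e : Sym2 (Fin n)) (he : ¬ e.IsDiag) : 0 ≤ edgeProb q e ∧ edgeProb q e ≤ 1 := by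
  induction e using Sym2.ind with
  | _ i j =>
    rw [Sym2.mk_isDiag_iff] at he
    have hd : 1 ≤ Nat.dist i.val j.val := by
      have : i.val ≠ j.val := fun h => he (Fin.ext h)
      have := Nat.dist_pos_of_ne this
      omega
    rw [edgeProb_eq]
    exact ⟨(hq _ hd).1, le_of_lt (hq _ hd).2⟩

lemma weight_nonneg {n : ℕ} (q : ℕ → ℝ) (hq : ∀ l, 1 ≤ l → 0 ≤ q l ∧ q l < 1)
    (f : Sym2 (Fin n) → Bool) : 0 ≤ weight q f := by
  apply Finset.prod_nonneg
  intro e _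
  by_cases hd : e.IsDiag
  · simp only [hd, if_true]; split <;> norm_num
  · obtain ⟨h0, h1⟩ := edgeProb_mem q hq e hd
    simp only [hd, if_false]; split <;> linarith

lemma pow_le_descFactorial (d : ℕ) : ∀ k : ℕ, (d + 1 - k) ^ k ≤ d.descFactorial k
  | 0 => by simp
  | (k+1) => by
    rw [Nat.descFactorial_succ]
    have h1 : d + 1 - (k+1) = d - k := by omega
    rw [h1, pow_succ']
    calc (d - k) * (d - k) ^ k
        ≤ (d - k) * (d + 1 - k) ^ k :=
          Nat.mul_le_mul_left _ (Nat.pow_le_pow_left (by omega) k)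
      _ ≤ (d - k) * d.descFactorial k :=
          Nat.mul_le_mul_left _ (pow_le_descFactorial d k)

lemma nat_dist_lt {a b : ℕ} (h : b < a) : Nat.dist a b = a - b := by
  unfold Nat.dist; omega

open Finset in
lemma sum_ite_le {n : ℕ} (q : ℕ → ℝ) (hqn : ∀ i ∈ Finset.Icc 1 n, 0 ≤ q i)
    (φ : Fin n → ℕ) (P : Fin n → Prop) [DecidablePred P]
    (hinj : ∀ y z : Fin n, P y → P z → φ y = φ z → y = z)
    (hle : ∀ y : Fin n, P y → φ y ≤ n)
    (hP : ∀ y : Fin n, P y → 1 ≤ φ y) :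
    ∑ y : Fin n, (if P y then q (φ y) else 0) ≤ ∑ l ∈ Finset.Icc 1 n, q l := by
  rw [← Finset.sum_filter]
  rw [← Finset.sum_image (f := q) (g := φ)
    (fun a ha b hb h => hinj a b (Finset.mem_filter.1 ha).2 (Finset.mem_filter.1 hb).2 h)]
  apply Finset.sum_le_sum_of_subset_of_nonneg
  · intro l hl
    obtain ⟨y, hy, rfl⟩ := Finset.mem_image.1 hl
    have hy' := (Finset.mem_filter.1 hy).2
    exact Finset.mem_Icc.2 ⟨hP y hy', hle y hy'⟩
  · intro i hi _
    exact hqn i hi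

open Finset in
lemma sum_dist_le {n : ℕ} (q : ℕ → ℝ) (hq : ∀ l, 1 ≤ l → 0 ≤ q l ∧ q l < 1) (x : Fin n) :
    ∑ y : Fin n, (if y = x then (0:ℝ) else q (Nat.dist x.val y.val))
      ≤ 2 * ∑ l ∈ Finset.Icc 1 n, q l := by
  classical
  have hqn : ∀ i ∈ Finset.Icc 1 n, 0 ≤ q i := fun i hi => (hq i (Finset.mem_Icc.1 hi).1).1
  have hsplit : ∀ y : Fin n, (if y = x then (0:ℝ) else q (Nat.dist x.val y.val))
      = (if y.val < x.val then q (x.val - y.val) else 0)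
        + (if x.val < y.val then q (y.val - x.val) else 0) := by
    intro y
    rcases lt_trichotomy y.val x.val with h | h | h
    · have hne : y ≠ x := fun he => by rw [he] at h; exact lt_irrefl _ h
      rw [if_neg hne, if_pos h, if_neg (by omega), nat_dist_lt h, add_zero]
    · have : y = x := Fin.ext h
      simp [this]
    · have hne : y ≠ x := fun he => by rw [he] at h; exact lt_irrefl _ h
      rw [if_neg hne, if_neg (by omega), if_pos h, Nat.dist_comm, nat_dist_lt h, zero_add]
  rw [Finset.sum_congr rfl (fun y _ => hsplit y), Finset.sum_add_distrib]
  have h1 := sum_ite_le q hqn (fun y => x.val - y.val) (fun y => y.val < x.val)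
    (fun y z hy hz h => Fin.ext (by omega))
    (fun y hy => by have := x.isLt; omega)
    (fun y h => by omega)
  have h2 := sum_ite_le q hqn (fun y => y.val - x.val) (fun y => x.val < y.val)
    (fun y z hy hz h => Fin.ext (by omega))
    (fun y hy => by have := y.isLt; omega)
    (fun y h => by omega)
  linarith

open Finset in
lemma quant {n : ℕ} (q : ℕ → ℝ) (hq : ∀ l, 1 ≤ l → 0 ≤ q l ∧ q l < 1) (k : ℕ) (hk : 1 ≤ k)
    (t : ℝ) (ht : (2 * k : ℝ) ≤ t) :
    1 - (n : ℝ) * ((4 * ∑ l ∈ Finset.Icc 1 n, q l) / t) ^ k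
      ≤ probEvent q n (fun G => ∀ x : Fin n, ((G.neighborSet x).ncard : ℝ) ≤ t) := by
  classical
  have hk0 : (0:ℝ) < k := by exact_mod_cast hk
  have ht0 : (0:ℝ) < t := lt_of_lt_of_le (by linarith) ht
  set S : ℝ := ∑ l ∈ Finset.Icc 1 n, q l with hSdef
  have hS0 : 0 ≤ S := Finset.sum_nonneg fun l hl => (hq l (Finset.mem_Icc.1 hl).1).1
  set a : Fin n → Fin n → ℝ :=
    fun x y => if y = x then 0 else q (Nat.dist x.val y.val) with hadef
  have ha0 : ∀ x y, 0 ≤ a x y := by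
    intro x y
    by_cases h : y = x
    · simp [hadef, h]
    · have hd : 1 ≤ Nat.dist x.val y.val := by
        have : x.val ≠ y.val := fun he => h (Fin.ext he.symm)
        have := Nat.dist_pos_of_ne this
        omega
      simp only [hadef, if_neg h]
      exact (hq _ hd).1
  set X : Fin n → (Sym2 (Fin n) → Bool) → ℝ := fun x f =>
    ∑ g : Fin k → Fin n, if (Function.Injective g ∧ ∀ i, g i ≠ x)
      then ∏ i : Fin k, (if f s(x, g i) then (1:ℝ) else 0) else 0 with hXdef
  have hX0 : ∀ x f, 0 ≤ X x f := by
    intro x f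
    apply Finset.sum_nonneg
    intro g _
    split
    · apply Finset.prod_nonneg; intro i _; split <;> norm_num
    · exact le_refl _
  -- expectation bound
  have hEX : ∀ x : Fin n, ∑ f : Sym2 (Fin n) → Bool, weight q f * X x f ≤ (2*S)^k := by
    intro x
    have swap : ∑ f : Sym2 (Fin n) → Bool, weight q f * X x f
        = ∑ g : Fin k → Fin n, if (Function.Injective g ∧ ∀ i, g i ≠ x)
            then ∑ f : Sym2 (Fin n) → Bool,
              weight q f * ∏ i : Fin k, (if f s(x, g i) then (1:ℝ) else 0)
            else 0 := by
      rw [hXdef]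
      simp only [Finset.mul_sum]
      rw [Finset.sum_comm]
      apply Finset.sum_congr rfl
      intro g _
      split
      · rfl
      · simp
    rw [swap]
    have hterm : ∀ g : Fin k → Fin n, (Function.Injective g ∧ ∀ i, g i ≠ x) →
        ∑ f : Sym2 (Fin n) → Bool,
            weight q f * ∏ i : Fin k, (if f s(x, g i) then (1:ℝ) else 0)
          = ∏ i : Fin k, a x (g i) := by
      intro g ⟨hginj, hgx⟩
      have hinj2 : ∀ i ∈ (univ : Finset (Fin k)), ∀ j ∈ (univ : Finset (Fin k)),
          s(x, g i) = s(x, g j) → i = j := by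
        intro i _ j _ h
        rw [Sym2.eq_iff] at h
        rcases h with ⟨-, h⟩ | ⟨h1, h2⟩
        · exact hginj h
        · exact absurd h1.symm (hgx j)
      have himg : ∀ f : Sym2 (Fin n) → Bool,
          ∏ i : Fin k, (if f s(x, g i) then (1:ℝ) else 0)
            = ∏ e ∈ Finset.image (fun i => s(x, g i)) univ, (if f e then (1:ℝ) else 0) := by
        intro f
        rw [Finset.prod_image hinj2]
      calc ∑ f : Sym2 (Fin n) → Bool,
              weight q f * ∏ i : Fin k, (if f s(x, g i) then (1:ℝ) else 0)
          = ∑ f : Sym2 (Fin n) → Bool,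
              weight q f * ∏ e ∈ Finset.image (fun i => s(x, g i)) univ,
                (if f e then (1:ℝ) else 0) := by
            exact Finset.sum_congr rfl fun f _ => by rw [himg f]
        _ = ∏ e ∈ Finset.image (fun i => s(x, g i)) univ, edgeProb q e := by
            apply weight_expect
            intro e he
            obtain ⟨i, -, rfl⟩ := Finset.mem_image.1 he
            rw [Sym2.mk_isDiag_iff]
            exact fun h => hgx i h.symm
        _ = ∏ i : Fin k, edgeProb q s(x, g i) := Finset.prod_image hinj2
        _ = ∏ i : Fin k, a x (g i) := by
            apply Finset.prod_congr rfl
            intro i _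
            rw [edgeProb_eq, hadef]
            simp only [if_neg (hgx i)]
    calc (∑ g : Fin k → Fin n, if (Function.Injective g ∧ ∀ i, g i ≠ x)
            then ∑ f : Sym2 (Fin n) → Bool,
              weight q f * ∏ i : Fin k, (if f s(x, g i) then (1:ℝ) else 0)
            else 0)
        ≤ ∑ g : Fin k → Fin n, ∏ i : Fin k, a x (g i) := by
          apply Finset.sum_le_sum
          intro g _
          split
          · rename_i hgood
            rw [hterm g hgood]
          · exact Finset.prod_nonneg fun i _ => ha0 x (g i)
      _ = (∑ y : Fin n, a x y) ^ k := (Fintype.sum_pow (a x) k).symm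
      _ ≤ (2*S)^k := by
          apply pow_le_pow_left₀
          · exact Finset.sum_nonneg fun y _ => ha0 x y
          · exact sum_dist_le q hq x
  -- lower bound for the bad event
  have hlow : ∀ (f : Sym2 (Fin n) → Bool) (x : Fin n),
      t < (((graphOf f).neighborSet x).ncard : ℝ) → (t/2)^k ≤ X x f := by
    intro f x hx
    set N : Finset (Fin n) := univ.filter (fun y => x ≠ y ∧ f s(x,y) = true) with hNdef
    have hNcard : ((graphOf f).neighborSet x).ncard = N.card := by
      have : (graphOf f).neighborSet x = ↑N := by
        ext y
        simp [hNdef, graphOf, SimpleGraph.neighborSet]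
      rw [this, Set.ncard_coe_finset]
    rw [hNcard] at hx
    set d : ℕ := N.card with hddef
    have hkd : k ≤ d := by
      have : (k:ℝ) < d := by linarith [hk0]
      exact_mod_cast this.le
    set B : Finset (Fin k → Fin n) :=
      univ.filter (fun g => Function.Injective g ∧ ∀ i, g i ∈ N) with hBdef
    have hcount : B.card = d.descFactorial k := by
      rw [← Fintype.card_coe B]
      have e : {g // g ∈ B} ≃ (Fin k ↪ {y // y ∈ N}) :=
        { toFun := fun ⟨g, hg⟩ =>
            ⟨fun i => ⟨g i, (Finset.mem_filter.1 hg).2.2 i⟩,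
             fun i j h => (Finset.mem_filter.1 hg).2.1 (congrArg Subtype.val h)⟩
          invFun := fun F =>
            ⟨fun i => (F i).1, Finset.mem_filter.2 ⟨Finset.mem_univ _,
              fun i j h => F.injective (Subtype.ext h), fun i => (F i).2⟩⟩
          left_inv := fun ⟨g, hg⟩ => rfl
          right_inv := fun F => by ext i; rfl }
      rw [Fintype.card_congr e, Fintype.card_embedding_eq, Fintype.card_coe,
        Fintype.card_fin]
    have hBX : (B.card : ℝ) ≤ X x f := by
      have h1 : ∀ g ∈ B, (1:ℝ) ≤ if (Function.Injective g ∧ ∀ i, g i ≠ x)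
          then ∏ i : Fin k, (if f s(x, g i) then (1:ℝ) else 0) else 0 := by
        intro g hg
        obtain ⟨-, hginj, hgN⟩ := Finset.mem_filter.1 hg
        have hgx : ∀ i, g i ≠ x := by
          intro i he
          exact ((Finset.mem_filter.1 (hgN i)).2.1) he.symm
        rw [if_pos ⟨hginj, hgx⟩]
        apply le_of_eq
        symm
        apply Finset.prod_eq_one
        intro i _
        rw [if_pos (Finset.mem_filter.1 (hgN i)).2.2]
      calc (B.card : ℝ) = ∑ _g ∈ B, (1:ℝ) := by simp
        _ ≤ ∑ g ∈ B, (if (Function.Injective g ∧ ∀ i, g i ≠ x)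
            then ∏ i : Fin k, (if f s(x, g i) then (1:ℝ) else 0) else 0) :=
          Finset.sum_le_sum h1
        _ ≤ X x f := by
          rw [hXdef]
          apply Finset.sum_le_sum_of_subset_of_nonneg (Finset.subset_univ B)
          intro g _ _
          split
          · exact Finset.prod_nonneg fun i _ => by split <;> norm_num
          · exact le_refl _
    have hdesc : (t/2)^k ≤ ((d.descFactorial k : ℕ) : ℝ) := by
      have hstep : (t/2) ≤ ((d + 1 - k : ℕ) : ℝ) := by
        have : ((d + 1 - k : ℕ) : ℝ) = (d:ℝ) + 1 - k := by
          have : k ≤ d + 1 := by omega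
          push_cast [Nat.cast_sub this]
          ring
        rw [this]
        linarith
      calc (t/2)^k ≤ ((d + 1 - k : ℕ) : ℝ)^k :=
            pow_le_pow_left₀ (by linarith) hstep k
        _ = (((d + 1 - k)^k : ℕ) : ℝ) := by push_cast; ring
        _ ≤ ((d.descFactorial k : ℕ) : ℝ) := by
            exact_mod_cast pow_le_descFactorial d k
    calc (t/2)^k ≤ ((d.descFactorial k : ℕ) : ℝ) := hdesc
      _ = (B.card : ℝ) := by rw [hcount]
      _ ≤ X x f := hBX
  -- Markov / union bound
  set m : ℝ := (t/2)^k with hmdef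
  have hm0 : 0 < m := pow_pos (by linarith) k
  set E : SimpleGraph (Fin n) → Prop :=
    fun G => ∀ x : Fin n, ((G.neighborSet x).ncard : ℝ) ≤ t with hEdef
  have hsplit : probEvent q n E
      + ∑ f : Sym2 (Fin n) → Bool, (if E (graphOf f) then 0 else weight q f) = 1 := by
    rw [probEvent, ← Finset.sum_add_distrib]
    rw [← sum_weight (n := n) q]
    apply Finset.sum_congr rfl
    intro f _
    split <;> ring
  have hmain : ∑ f : Sym2 (Fin n) → Bool, (if E (graphOf f) then 0 else weight q f)
      ≤ (n : ℝ) * ((4 * S) / t) ^ k := by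
    calc ∑ f : Sym2 (Fin n) → Bool, (if E (graphOf f) then 0 else weight q f)
        ≤ ∑ f : Sym2 (Fin n) → Bool, weight q f * ((∑ x : Fin n, X x f) / m) := by
          apply Finset.sum_le_sum
          intro f _
          have hw0 := weight_nonneg q hq f
          split
          · apply mul_nonneg hw0
            apply div_nonneg _ hm0.le
            exact Finset.sum_nonneg fun x _ => hX0 x f
          · rename_i hE
            simp only [hEdef, not_forall, not_le] at hE
            obtain ⟨x, hx⟩ := hE
            have h1 : m ≤ X x f := hlow f x hx
            have h2 : X x f ≤ ∑ x' : Fin n, X x' f :=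
              Finset.single_le_sum (fun x' _ => hX0 x' f) (Finset.mem_univ x)
            have : 1 ≤ (∑ x' : Fin n, X x' f) / m := by
              rw [le_div_iff₀ hm0]
              linarith
            exact le_mul_of_one_le_right hw0 this
      _ = (∑ x : Fin n, ∑ f : Sym2 (Fin n) → Bool, weight q f * X x f) / m := by
          have h : ∀ f : Sym2 (Fin n) → Bool,
              weight q f * ((∑ x : Fin n, X x f) / m)
                = ∑ x : Fin n, weight q f * X x f / m := by
            intro f
            rw [← mul_div_assoc, Finset.mul_sum, Finset.sum_div]
          rw [Finset.sum_congr rfl fun f _ => h f, Finset.sum_comm, Finset.sum_div]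
          exact Finset.sum_congr rfl fun x _ => (Finset.sum_div _ _ _).symm
      _ ≤ ((n:ℝ) * (2*S)^k) / m := by
          have hsum : ∑ x : Fin n, ∑ f : Sym2 (Fin n) → Bool, weight q f * X x f
              ≤ (n:ℝ) * (2*S)^k := by
            calc ∑ x : Fin n, ∑ f : Sym2 (Fin n) → Bool, weight q f * X x f
                ≤ ∑ _x : Fin n, (2*S)^k := Finset.sum_le_sum fun x _ => hEX x
              _ = (n:ℝ) * (2*S)^k := by
                  rw [Finset.sum_const, Finset.card_univ, Fintype.card_fin, nsmul_eq_mul]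
          exact (div_le_div_iff_of_pos_right hm0).2 hsum
      _ = (n : ℝ) * ((4 * S) / t) ^ k := by
          have hx : (2*S)/(t/2) = 4*S/t := by
            field_simp
            ring
          rw [hmdef, mul_div_assoc, ← div_pow, hx]
  linarith

lemma probEvent_nonneg (q : ℕ → ℝ) (hq : ∀ l, 1 ≤ l → 0 ≤ q l ∧ q l < 1) (n : ℕ)
    (E : SimpleGraph (Fin n) → Prop) : 0 ≤ probEvent q n E := by
  apply Finset.sum_nonneg
  intro f _
  split
  · exact weight_nonneg q hq f
  · exact le_refl _

lemma probEvent_le_one (q : ℕ → ℝ) (hq : ∀ l, 1 ≤ l → 0 ≤ q l ∧ q l < 1) (n : ℕ)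
    (E : SimpleGraph (Fin n) → Prop) : probEvent q n E ≤ 1 := by
  rw [← sum_weight (n := n) q]
  apply Finset.sum_le_sum
  intro f _
  split
  · exact le_refl _
  · exact weight_nonneg q hq f

theorem statement_12_aux (q : ℕ → ℝ) (hq : ∀ l, 1 ≤ l → 0 ≤ q l ∧ q l < 1)
    (δ : ℝ) (hδ : 0 < δ)
    (hub : ∀ m : ℕ, ∃ n : ℕ, m ≤ n ∧ ∑ l ∈ Finset.Icc 1 n, q l ≤ (n : ℝ) ^ δ) :
    limsup (fun n => probEvent q n
      (fun G => ∀ x : Fin n,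
        ((G.neighborSet x).ncard : ℝ) ≤ 8 * (n : ℝ) ^ (2 * δ))) atTop = 1 := by
  classical
  set F : ℕ → ℝ := fun n => probEvent q n
      (fun G => ∀ x : Fin n,
        ((G.neighborSet x).ncard : ℝ) ≤ 8 * (n : ℝ) ^ (2 * δ)) with hF
  have hF1 : ∀ n, F n ≤ 1 := fun n => probEvent_le_one q hq n _
  have hF0 : ∀ n, 0 ≤ F n := fun n => probEvent_nonneg q hq n _
  have hbdd : IsBoundedUnder (· ≤ ·) atTop F :=
    isBoundedUnder_of ⟨1, fun n => hF1 n⟩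
  have hbdd' : IsBoundedUnder (· ≥ ·) atTop F :=
    isBoundedUnder_of ⟨0, fun n => hF0 n⟩
  apply le_antisymm
  · exact Filter.limsup_le_of_le hbdd'.isCoboundedUnder_le
      (Filter.Eventually.of_forall hF1)
  · -- choose k
    set k : ℕ := ⌈2/δ⌉₊ ⊔ 1 with hkdef
    have hk1 : 1 ≤ k := le_sup_right
    have hkδ : (2:ℝ) ≤ δ * k := by
      have h1 : (2/δ : ℝ) ≤ (⌈2/δ⌉₊ : ℕ) := Nat.le_ceil _
      have h2 : ((⌈2/δ⌉₊ : ℕ) : ℝ) ≤ (k : ℝ) := by exact_mod_cast Nat.le_of_eq rfl |>.trans le_sup_left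
      have h3 : (2/δ : ℝ) ≤ k := le_trans h1 h2
      rw [div_le_iff₀ hδ] at h3
      linarith
    apply le_of_forall_pos_le_add
    intro ε hε
    -- eventual conditions
    have ev1 : ∀ᶠ n : ℕ in atTop, 1 ≤ n := eventually_ge_atTop 1
    have tend2 : Tendsto (fun n : ℕ => 8 * (n:ℝ) ^ (2*δ)) atTop atTop := by
      apply Filter.Tendsto.const_mul_atTop (by norm_num : (0:ℝ) < 8)
      exact (tendsto_rpow_atTop (by linarith)).comp tendsto_natCast_atTop_atTop
    have ev2 : ∀ᶠ n : ℕ in atTop, (2*k : ℝ) ≤ 8 * (n:ℝ) ^ (2*δ) :=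
      tend2.eventually_ge_atTop _
    have tend3 : Tendsto (fun n : ℕ => (n:ℝ) ^ (1 - δ*k)) atTop (nhds 0) := by
      have h := (tendsto_rpow_neg_atTop (y := δ*k - 1) (by linarith)).comp
        (tendsto_natCast_atTop_atTop (R := ℝ))
      simpa [Function.comp_def, neg_sub] using h
    have ev3 : ∀ᶠ n : ℕ in atTop, (n:ℝ) ^ (1 - δ*k) < ε :=
      tend3.eventually_lt_const hε
    have hfreq : ∃ᶠ n : ℕ in atTop, ∑ l ∈ Finset.Icc 1 n, q l ≤ (n : ℝ) ^ δ := by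
      rw [Filter.frequently_atTop]
      exact fun m => hub m
    have hfreq2 := hfreq.and_eventually (ev1.and (ev2.and ev3))
    have key : ∀ n : ℕ, (∑ l ∈ Finset.Icc 1 n, q l ≤ (n : ℝ) ^ δ) →
        1 ≤ n → ((2*k : ℝ) ≤ 8 * (n:ℝ) ^ (2*δ)) → ((n:ℝ) ^ (1 - δ*k) < ε) →
        1 - ε ≤ F n := by
      intro n hsum hn1 h2k hsmall
      have hn0 : (0:ℝ) < n := by exact_mod_cast hn1
      set t : ℝ := 8 * (n:ℝ) ^ (2*δ) with htdef
      have ht0 : (0:ℝ) < t := by positivity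
      have hS0 : (0:ℝ) ≤ ∑ l ∈ Finset.Icc 1 n, q l :=
        Finset.sum_nonneg fun l hl => (hq l (Finset.mem_Icc.1 hl).1).1
      have hquant := quant (n := n) q hq k hk1 t h2k
      have hnd : (0:ℝ) < (n:ℝ)^δ := Real.rpow_pos_of_pos hn0 _
      have hbound : (n : ℝ) * ((4 * ∑ l ∈ Finset.Icc 1 n, q l) / t) ^ k ≤ ε := by
        have step1 : ((4 * ∑ l ∈ Finset.Icc 1 n, q l) / t) ^ k
            ≤ ((4 * (n:ℝ)^δ) / t) ^ k := by
          apply pow_le_pow_left₀ (by positivity)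
          exact (div_le_div_iff_of_pos_right ht0).2 (by linarith)
        have hform : (4 * (n:ℝ)^δ) / t = (1/2) * ((n:ℝ)^δ)⁻¹ := by
          rw [htdef, show (2:ℝ)*δ = δ + δ by ring, Real.rpow_add hn0]
          field_simp
          ring
        calc (n : ℝ) * ((4 * ∑ l ∈ Finset.Icc 1 n, q l) / t) ^ k
            ≤ (n : ℝ) * ((4 * (n:ℝ)^δ) / t) ^ k :=
              mul_le_mul_of_nonneg_left step1 hn0.le
          _ = (n : ℝ) * ((1/2:ℝ)^k * ((n:ℝ)^(δ*(k:ℕ)))⁻¹) := by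
              rw [hform, mul_pow, inv_pow, ← Real.rpow_natCast ((n:ℝ)^δ) k,
                ← Real.rpow_mul hn0.le]
          _ ≤ (n : ℝ) * (1 * ((n:ℝ)^(δ*(k:ℕ)))⁻¹) := by
              apply mul_le_mul_of_nonneg_left _ hn0.le
              apply mul_le_mul_of_nonneg_right
              · exact pow_le_one₀ (by norm_num) (by norm_num)
              · exact inv_nonneg.2 (Real.rpow_nonneg hn0.le _)
          _ = (n:ℝ)^(1-δ*k) := by
              rw [one_mul, Real.rpow_sub hn0, Real.rpow_one, div_eq_mul_inv]
          _ ≤ ε := hsmall.le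
      linarith
    have hlim : ∃ᶠ n : ℕ in atTop, 1 - ε ≤ F n := by
      apply hfreq2.mono
      rintro n ⟨hsum, hn1, h2k, hsmall⟩
      exact key n hsum hn1 h2k hsmall
    have := Filter.le_limsup_of_frequently_le hlim hbdd
    linarith


theorem statement_12 (q : ℕ → ℝ) (hq : ∀ l, 1 ≤ l → 0 ≤ q l ∧ q l < 1)
    (δ : ℝ) (hδ : 0 < δ)
    (hub : ∀ m : ℕ, ∃ n : ℕ, m ≤ n ∧ ∑ l ∈ Finset.Icc 1 n, q l ≤ (n : ℝ) ^ δ) :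
    limsup (fun n => probEvent q n
      (fun G => ∀ x : Fin n,
        ((G.neighborSet x).ncard : ℝ) ≤ 8 * (n : ℝ) ^ (2 * δ))) atTop = 1 :=
  statement_12_aux q hq δ hδ hub
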